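/- For regret matching with bounded regrets, the maximum regret on any single action after T iterations is bounded: max_a R_T(a) ≤ Δ √(|A|·T). -/

import Mathlib

open Finset

/-- Regret matching guarantee: after T iterations with instantaneous regrets bounded
by Δ, the maximum cumulative regret on any action is at most Δ√(|A|·T). -/
theorem regret_matching_max_regret_bound
    {A : Type*} [Fintype A] [Nonempty A] (T : ℕ) (Δ : ℝ) (hΔ : 0 ≤ Δ)
    (u σ : ℕ → A → ℝ)
    (hσ0 : ∀ t a, 0 ≤ σ t a) (hσ1 : ∀ t, ∑ a, σ t a = 1)
    (r : ℕ → A → ℝ) (hr : ∀ t a, r t a = u t a - ∑ a', σ t a' * u t a')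
    (hrbd : ∀ t a, |r t a| ≤ Δ)
    (R : ℕ → A → ℝ) (hR : ∀ n a, R n a = ∑ t ∈ Finset.Icc 1 n, r t a)
    (hrm : ∀ t, 0 < (∑ a, max (R t a) 0) →
      ∀ a, σ (t + 1) a = max (R t a) 0 / ∑ a', max (R t a') 0) :
    ∀ a, R T a ≤ Δ * Real.sqrt ((Fintype.card A : ℝ) * T) := by
  -- expected value of regret is zero
  have hrzero : ∀ t, ∑ a, σ t a * r t a = 0 := by
    intro t
    have : ∑ a, σ t a * r t a
        = ∑ a, σ t a * u t a - (∑ a, σ t a) * (∑ a', σ t a' * u t a') := by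
      rw [Finset.sum_mul, ← Finset.sum_sub_distrib]
      refine Finset.sum_congr rfl fun a _ => ?_
      rw [hr]; ring
    rw [this, hσ1]; ring
  -- key invariant
  have key : ∀ n : ℕ, ∑ a, (max (R n a) 0) ^ 2
      ≤ (Fintype.card A : ℝ) * Δ ^ 2 * n := by
    intro n
    induction n with
    | zero =>
      simp only [Nat.cast_zero, mul_zero]
      have : ∀ a : A, R 0 a = 0 := by intro a; rw [hR]; simp
      apply le_of_eq
      refine Finset.sum_eq_zero fun a _ => ?_
      rw [this a]; norm_num
    | succ n ih =>
      have hstep : ∀ a, R (n + 1) a = R n a + r (n + 1) a := by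
        intro a
        rw [hR, hR, ← Finset.sum_Icc_succ_top (by omega : 1 ≤ n + 1)]
      have hcross : ∑ a, max (R n a) 0 * r (n + 1) a = 0 := by
        by_cases hS : 0 < ∑ a, max (R n a) 0
        · have hσ := hrm n hS
          have : ∀ a, max (R n a) 0 = σ (n + 1) a * (∑ a', max (R n a') 0) := by
            intro a; rw [hσ a]; field_simp
          calc ∑ a, max (R n a) 0 * r (n + 1) a
              = (∑ a', max (R n a') 0) * ∑ a, σ (n + 1) a * r (n + 1) a := by
                rw [Finset.mul_sum]
                exact Finset.sum_congr rfl fun a _ => by rw [this a]; ring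
            _ = 0 := by rw [hrzero]; ring
        · have hS0 : ∑ a, max (R n a) 0 = 0 := by
            have : 0 ≤ ∑ a, max (R n a) 0 :=
              Finset.sum_nonneg fun a _ => le_max_right _ _
            linarith
          have hz : ∀ a ∈ Finset.univ, max (R n a) 0 = 0 :=
            (Finset.sum_eq_zero_iff_of_nonneg
              (fun a _ => le_max_right _ _)).1 hS0
          refine Finset.sum_eq_zero fun a ha => ?_
          rw [hz a ha, zero_mul]
      have hterm : ∀ a, (max (R (n + 1) a) 0) ^ 2
          ≤ (max (R n a) 0 + r (n + 1) a) ^ 2 := by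
        intro a
        rw [hstep a]
        rcases le_or_gt (R n a + r (n + 1) a) 0 with h | h
        · rw [max_eq_right h]; simpa using sq_nonneg (max (R n a) 0 + r (n + 1) a)
        · rw [max_eq_left h.le]
          have h1 : R n a + r (n + 1) a ≤ max (R n a) 0 + r (n + 1) a := by
            have := le_max_left (R n a) 0; linarith
          have h2 : 0 ≤ max (R n a) 0 + r (n + 1) a := le_trans h.le h1
          nlinarith
      have hr2 : ∀ a, (r (n + 1) a) ^ 2 ≤ Δ ^ 2 := by
        intro a
        have := hrbd (n + 1) a
        nlinarith [abs_nonneg (r (n + 1) a), sq_abs (r (n + 1) a)]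
      calc ∑ a, (max (R (n + 1) a) 0) ^ 2
          ≤ ∑ a, (max (R n a) 0 + r (n + 1) a) ^ 2 :=
            Finset.sum_le_sum fun a _ => hterm a
        _ = (∑ a, (max (R n a) 0) ^ 2)
            + 2 * (∑ a, max (R n a) 0 * r (n + 1) a)
            + ∑ a, (r (n + 1) a) ^ 2 := by
            rw [Finset.mul_sum, ← Finset.sum_add_distrib, ← Finset.sum_add_distrib]
            exact Finset.sum_congr rfl fun a _ => by ring
        _ ≤ (Fintype.card A : ℝ) * Δ ^ 2 * n + 2 * 0
            + (Fintype.card A : ℝ) * Δ ^ 2 := by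
            have hsum2 : ∑ a, (r (n + 1) a) ^ 2 ≤ (Fintype.card A : ℝ) * Δ ^ 2 := by
              calc ∑ a, (r (n + 1) a) ^ 2 ≤ ∑ _a : A, Δ ^ 2 :=
                    Finset.sum_le_sum fun a _ => hr2 a
                _ = (Fintype.card A : ℝ) * Δ ^ 2 := by
                    rw [Finset.sum_const, Finset.card_univ]; ring
            rw [hcross]
            linarith
        _ = (Fintype.card A : ℝ) * Δ ^ 2 * (n + 1 : ℕ) := by
            push_cast; ring
  intro a
  have h1 : (max (R T a) 0) ^ 2 ≤ (Fintype.card A : ℝ) * Δ ^ 2 * T := by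
    refine le_trans ?_ (key T)
    exact Finset.single_le_sum (f := fun b => (max (R T b) 0) ^ 2)
      (fun b _ => sq_nonneg _) (Finset.mem_univ a)
  have h2 : R T a ≤ max (R T a) 0 := le_max_left _ _
  have h3 : max (R T a) 0 ≤ Real.sqrt ((Fintype.card A : ℝ) * Δ ^ 2 * T) := by
    rw [← Real.sqrt_sq (le_max_right (R T a) 0)]
    exact Real.sqrt_le_sqrt h1
  have h4 : Real.sqrt ((Fintype.card A : ℝ) * Δ ^ 2 * T)
      = Δ * Real.sqrt ((Fintype.card A : ℝ) * T) := by
    rw [show (Fintype.card A : ℝ) * Δ ^ 2 * T = Δ ^ 2 * ((Fintype.card A : ℝ) * T) by ring,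
      Real.sqrt_mul (by positivity), Real.sqrt_sq hΔ]
  linarith [h3, h4 ▸ h3]
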